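/- Let T ≥ 1 and let θ, X_0,…,X_{T−1}, Y_1,…,Y_T be finite-valued random variables with I(X_t ; θ | X_{0:t−1}, Y_{1:t}) = 0 for all 0 ≤ t ≤ T−1. For each t let P*_t denote the conditional pmf of Y_{t+1} given (θ, H_t), let P̂_t denote the conditional pmf of Y_{t+1} given H_t (the Bayesian posterior predictive), and let P̃_t be any function assigning to each realization of H_t a probability mass function on the label alphabet. Then, as an identity in [0,∞]: (1/T)·∑_{t=0}^{T−1} E[ D_KL( P*_t ‖ P̃_t(H_t) ) ] = I(θ ; D_T)/T + (1/T)·∑_{t=0}^{T−1} E[ D_KL( P̂_t ‖ P̃_t(H_t) ) ]. That is, the loss of an arbitrary history-measurable predictive algorithm equals the optimal error plus a misspecification error term. -/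

import Mathlib

/-!
Statement 2: the loss of an arbitrary history-measurable predictive algorithm equals the
optimal (Bayes) error plus a misspecification term, as an identity in `[0,∞]`:
`(1/T)·∑_t E[D_KL(P*_t ‖ P̃_t(H_t))] = I(θ;D_T)/T + (1/T)·∑_t E[D_KL(P̂_t ‖ P̃_t(H_t))]`.
-/

open scoped Classical ENNReal

noncomputable section

/-- Probability of the event `X = a` under the pmf `p` on a finite sample space. -/
def pr {Ω : Type*} [Fintype Ω] (p : Ω → ℝ) {A : Type*} (X : Ω → A) (a : A) : ℝ :=
  ∑ ω, if X ω = a then p ω else 0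

/-- Conditional pmf of `Y` given `X = a`, evaluated at `b` (with the convention `0/0 = 0`). -/
def condPr {Ω : Type*} [Fintype Ω] (p : Ω → ℝ) {A B : Type*}
    (Y : Ω → B) (X : Ω → A) (b : B) (a : A) : ℝ :=
  pr p (fun ω => (Y ω, X ω)) (b, a) / pr p X a

/-- Shannon entropy of a random variable (in nats). -/
def entropy {Ω : Type*} [Fintype Ω] (p : Ω → ℝ) {A : Type*} [Fintype A] (X : Ω → A) : ℝ :=
  ∑ a, Real.negMulLog (pr p X a)

/-- Mutual information `I(X;Y) = H(X) + H(Y) - H(X,Y)` (in nats). -/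
def mutualInfo {Ω : Type*} [Fintype Ω] (p : Ω → ℝ) {A B : Type*} [Fintype A] [Fintype B]
    (X : Ω → A) (Y : Ω → B) : ℝ :=
  entropy p X + entropy p Y - entropy p (fun ω => (X ω, Y ω))

/-- Conditional mutual information `I(X;Y|Z) = H(X,Z) + H(Y,Z) - H(X,Y,Z) - H(Z)` (in nats). -/
def condMutualInfo {Ω : Type*} [Fintype Ω] (p : Ω → ℝ) {A B C : Type*}
    [Fintype A] [Fintype B] [Fintype C] (X : Ω → A) (Y : Ω → B) (Z : Ω → C) : ℝ :=
  entropy p (fun ω => (X ω, Z ω)) + entropy p (fun ω => (Y ω, Z ω))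
    - entropy p (fun ω => ((X ω, Y ω), Z ω)) - entropy p Z

/-- KL divergence between pmfs on a finite set, valued in `[0,∞]`. -/
def klDivF {A : Type*} [Fintype A] (p q : A → ℝ) : ℝ≥0∞ :=
  if ∀ a, q a = 0 → p a = 0 then ENNReal.ofReal (∑ a, p a * Real.log (p a / q a)) else ⊤

/-- The history `H_t = (X_{0:t}, Y_{1:t})`, as a random variable. -/
def histRV {Ω 𝒳 𝒴 : Type*} {T : ℕ} (X : Fin T → Ω → 𝒳) (Y : Fin T → Ω → 𝒴)
    (t : Fin T) (ω : Ω) : (Fin ((t : ℕ) + 1) → 𝒳) × (Fin (t : ℕ) → 𝒴) :=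
  (fun i => X (Fin.castLE t.isLt i) ω, fun i => Y (Fin.castLE (le_of_lt t.isLt) i) ω)

/-- The past data `(X_{0:t-1}, Y_{1:t})` strictly before the input `X_t`. -/
def pastRV {Ω 𝒳 𝒴 : Type*} {T : ℕ} (X : Fin T → Ω → 𝒳) (Y : Fin T → Ω → 𝒴)
    (t : Fin T) (ω : Ω) : (Fin (t : ℕ) → 𝒳) × (Fin (t : ℕ) → 𝒴) :=
  (fun i => X (Fin.castLE (le_of_lt t.isLt) i) ω, fun i => Y (Fin.castLE (le_of_lt t.isLt) i) ω)

section Basics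
variable {Ω : Type*} [Fintype Ω] {p : Ω → ℝ}

lemma pr_nonneg (hp0 : ∀ ω, 0 ≤ p ω) {A : Type*} (X : Ω → A) (a : A) : 0 ≤ pr p X a :=
  Finset.sum_nonneg fun ω _ => by by_cases h : X ω = a <;> simp [pr, h, hp0 ω]

lemma pr_pos (hp0 : ∀ ω, 0 ≤ p ω) {A : Type*} {X : Ω → A} {a : A} {ω : Ω}
    (hω : 0 < p ω) (hX : X ω = a) : 0 < pr p X a := by
  have h1 : (if X ω = a then p ω else 0) ≤ pr p X a := by
    refine Finset.single_le_sum (f := fun ω' => if X ω' = a then p ω' else 0) ?_ (Finset.mem_univ ω)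
    intro ω' _; by_cases h : X ω' = a <;> simp [h, hp0 ω']
  rw [if_pos hX] at h1; linarith

lemma pr_pos_elim (hp0 : ∀ ω, 0 ≤ p ω) {A : Type*} {X : Ω → A} {a : A}
    (h : 0 < pr p X a) : ∃ ω, 0 < p ω ∧ X ω = a := by
  by_contra hc
  push_neg at hc
  have : pr p X a = 0 := by
    apply Finset.sum_eq_zero; intro ω _
    by_cases hX : X ω = a
    · have := hc ω
      rw [if_pos hX]
      rcases lt_or_eq_of_le (hp0 ω) with h' | h'
      · exact absurd hX (this h')
      · exact h'.symm
    · rw [if_neg hX]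
  linarith

/-- pushforward: `∑ a, pr p X a * f a = ∑ ω, p ω * f (X ω)` -/
lemma sum_pr_mul {A : Type*} [Fintype A] (X : Ω → A) (f : A → ℝ) :
    ∑ a, pr p X a * f a = ∑ ω, p ω * f (X ω) := by
  unfold pr
  have : ∀ a : A, (∑ ω, if X ω = a then p ω else 0) * f a
      = ∑ ω, if X ω = a then p ω * f a else 0 := by
    intro a; rw [Finset.sum_mul]; apply Finset.sum_congr rfl; intro ω _
    by_cases h : X ω = a <;> simp [h]
  simp_rw [this]
  rw [Finset.sum_comm]
  apply Finset.sum_congr rfl; intro ω _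
  simp

lemma pr_comp {A B : Type*} [Fintype A] (Z : Ω → A) (F : A → B) (v : B) :
    pr p (fun ω => F (Z ω)) v = ∑ a, if F a = v then pr p Z a else 0 := by
  unfold pr
  have : ∀ a : A, (if F a = v then ∑ ω, if Z ω = a then p ω else 0 else 0)
      = ∑ ω, if Z ω = a then (if F a = v then p ω else 0) else 0 := by
    intro a; by_cases h : F a = v <;> simp [h]
  simp_rw [this]
  rw [Finset.sum_comm]
  apply Finset.sum_congr rfl; intro ω _
  rw [Finset.sum_ite_eq Finset.univ (Z ω) (fun a => if F a = v then p ω else 0)]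
  simp

lemma pr_comp_inj {A B : Type*} [Fintype A] (Z : Ω → A) {F : A → B}
    (hF : Function.Injective F) (a : A) :
    pr p (fun ω => F (Z ω)) (F a) = pr p Z a := by
  rw [pr_comp]
  rw [Finset.sum_eq_single a (fun a' _ hne => by rw [if_neg (fun h => hne (hF h))])
    (fun h => absurd (Finset.mem_univ a) h)]
  simp

lemma pr_comp_ge (hp0 : ∀ ω, 0 ≤ p ω) {A B : Type*} [Fintype A] (Z : Ω → A) (F : A → B)
    (a : A) : pr p Z a ≤ pr p (fun ω => F (Z ω)) (F a) := by
  conv_rhs => rw [pr_comp]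
  have := Finset.single_le_sum (f := fun a' => if F a' = F a then pr p Z a' else 0)
    (fun a' _ => by by_cases h : F a' = F a <;> simp [h, pr_nonneg hp0]) (Finset.mem_univ a)
  simpa using this

/-- marginalization over the first coordinate of a pair -/
lemma pr_marg {A B : Type*} [Fintype A] [Fintype B] (YY : Ω → B) (X : Ω → A) (a : A) :
    ∑ b, pr p (fun ω => (YY ω, X ω)) (b, a) = pr p X a := by
  unfold pr
  rw [Finset.sum_comm]
  apply Finset.sum_congr rfl; intro ω _
  by_cases h : X ω = a
  · simp [Prod.mk.injEq, h, Finset.sum_ite_eq]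
  · simp [Prod.mk.injEq, h]

lemma entropy_congr {A : Type*} [Fintype A] {Z Z' : Ω → A} (h : ∀ ω, Z ω = Z' ω) :
    entropy p Z = entropy p Z' := by
  have : Z = Z' := funext h
  rw [this]

lemma entropy_comp_inj {A B : Type*} [Fintype A] [Fintype B] (Z : Ω → A) {F : A → B}
    (hF : Function.Injective F) :
    entropy p (fun ω => F (Z ω)) = entropy p Z := by
  unfold entropy
  rw [← Finset.sum_subset (Finset.subset_univ (Finset.univ.image F))]
  · rw [Finset.sum_image (fun a _ a' _ h => hF h)]
    apply Finset.sum_congr rfl; intro a _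
    rw [pr_comp_inj Z hF]
  · intro b _ hb
    have : pr p (fun ω => F (Z ω)) b = 0 := by
      rw [pr_comp]
      apply Finset.sum_eq_zero; intro a _
      rw [if_neg (fun h => hb (Finset.mem_image.2 ⟨a, Finset.mem_univ a, h⟩))]
    rw [this, Real.negMulLog_zero]

lemma condPr_nonneg (hp0 : ∀ ω, 0 ≤ p ω) {A B : Type*} (YY : Ω → B) (X : Ω → A)
    (b : B) (a : A) : 0 ≤ condPr p YY X b a :=
  div_nonneg (pr_nonneg hp0 _ _) (pr_nonneg hp0 _ _)

lemma condPr_sum_one (hp0 : ∀ ω, 0 ≤ p ω) {A B : Type*} [Fintype A] [Fintype B]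
    (YY : Ω → B) (X : Ω → A) {a : A} (ha : pr p X a ≠ 0) :
    ∑ b, condPr p YY X b a = 1 := by
  unfold condPr
  rw [← Finset.sum_div, pr_marg, div_self ha]

lemma pr_pair_eq_zero (hp0 : ∀ ω, 0 ≤ p ω) {A B : Type*} [Fintype A] [Fintype B]
    {YY : Ω → B} {X : Ω → A} {a : A} (ha : pr p X a = 0) (b : B) :
    pr p (fun ω => (YY ω, X ω)) (b, a) = 0 := by
  have h1 := pr_marg (p := p) YY X a
  rw [ha] at h1
  have h2 : ∀ b' ∈ Finset.univ, (0:ℝ) ≤ pr p (fun ω => (YY ω, X ω)) (b', a) :=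
    fun b' _ => pr_nonneg hp0 _ _
  have := (Finset.sum_eq_zero_iff_of_nonneg h2).1 h1
  exact this b (Finset.mem_univ b)

lemma condPr_pos (hp0 : ∀ ω, 0 ≤ p ω) {A B : Type*} {YY : Ω → B} {X : Ω → A} {ω : Ω}
    (hω : 0 < p ω) : 0 < condPr p YY X (YY ω) (X ω) :=
  div_pos (pr_pos hp0 hω rfl) (pr_pos hp0 hω rfl)

/-- Gibbs' inequality. -/
lemma gibbs {B : Type*} [Fintype B] {f q : B → ℝ} (hf0 : ∀ b, 0 ≤ f b) (hq0 : ∀ b, 0 ≤ q b)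
    (hf1 : ∑ b, f b = 1) (hq1 : ∑ b, q b ≤ 1) (hsupp : ∀ b, q b = 0 → f b = 0) :
    0 ≤ ∑ b, f b * Real.log (f b / q b) := by
  have key : ∀ b, f b - q b ≤ f b * Real.log (f b / q b) := by
    intro b
    rcases lt_or_eq_of_le (hf0 b) with hf | hf
    · have hq : 0 < q b := lt_of_le_of_ne (hq0 b) (fun h => by
        have := hsupp b h.symm; linarith)
      have h1 : Real.log (q b / f b) ≤ q b / f b - 1 :=
        Real.log_le_sub_one_of_pos (div_pos hq hf)
      have h2 : Real.log (f b / q b) = - Real.log (q b / f b) := by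
        rw [← Real.log_inv]; congr 1; field_simp
      rw [h2]
      have h3 : 1 - q b / f b ≤ - Real.log (q b / f b) := by linarith
      calc f b - q b = f b * (1 - q b / f b) := by field_simp
        _ ≤ f b * (- Real.log (q b / f b)) :=
            mul_le_mul_of_nonneg_left h3 (le_of_lt hf)
    · rw [← hf]; simp [← hf, hq0 b]
  calc (0:ℝ) = 1 - 1 := by ring
    _ ≤ ∑ b, f b - ∑ b, q b := by rw [hf1]; linarith
    _ = ∑ b, (f b - q b) := (Finset.sum_sub_distrib f q).symm
    _ ≤ _ := Finset.sum_le_sum (fun b _ => key b)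

end Basics

section Core
variable {Ω A B C : Type*} [Fintype Ω] [Fintype A] [Fintype B] [Fintype C]
  {p : Ω → ℝ}
  (A' : Ω → A) (B' : Ω → B) (C' : Ω → C)

lemma expected_condPr (hp0 : ∀ ω, 0 ≤ p ω) {D : Type*} [Fintype D] (W : Ω → D)
    (f : Ω → B → ℝ) (h : D → B → ℝ)
    (hf : ∀ ω b, f ω b = condPr p B' W b (W ω) * h (W ω) b) :
    ∑ ω, p ω * ∑ b, f ω b
      = ∑ w, ∑ b, pr p (fun ω => (B' ω, W ω)) (b, w) * h w b := by
  simp_rw [hf]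
  rw [← sum_pr_mul (p := p) W (fun w => ∑ b, condPr p B' W b w * h w b)]
  refine Finset.sum_congr rfl fun w _ => ?_
  rw [Finset.mul_sum]
  refine Finset.sum_congr rfl fun b _ => ?_
  unfold condPr
  by_cases hw : pr p W w = 0
  · rw [hw, pr_pair_eq_zero hp0 hw]; simp
  · field_simp

lemma pr_marg_middle (b : B) (c : C) :
    pr p (fun ω => (B' ω, C' ω)) (b, c)
      = ∑ a, pr p (fun ω => (B' ω, (A' ω, C' ω))) (b, (a, c)) := by
  have h := pr_comp (p := p) (fun ω => (B' ω, (A' ω, C' ω)))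
    (fun x : B × A × C => (x.1, x.2.2)) (b, c)
  rw [show (fun ω => (B' ω, C' ω))
      = (fun ω => ((fun x : B × A × C => (x.1, x.2.2)) (B' ω, (A' ω, C' ω)))) from rfl, h]
  rw [Fintype.sum_prod_type]
  rw [Finset.sum_eq_single b]
  · rw [Fintype.sum_prod_type]
    refine Finset.sum_congr rfl fun a _ => ?_
    rw [Finset.sum_eq_single c]
    · simp
    · intro c' _ hne; rw [if_neg (by simp [Prod.ext_iff]; tauto)]
    · intro h; exact absurd (Finset.mem_univ c) h
  · intro b' _ hne
    apply Finset.sum_eq_zero; intro x _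
    rw [if_neg (by simp [Prod.ext_iff]; tauto)]
  · intro h; exact absurd (Finset.mem_univ b) h

lemma entropy_fst_expand {D : Type*} [Fintype D] (W : Ω → D) :
    entropy p W
      = - ∑ w, ∑ b, pr p (fun ω => (B' ω, W ω)) (b, w) * Real.log (pr p W w) := by
  unfold entropy
  have h : ∀ w, Real.negMulLog (pr p W w)
      = - ∑ b, pr p (fun ω => (B' ω, W ω)) (b, w) * Real.log (pr p W w) := by
    intro w
    simp only [Real.negMulLog, neg_mul]
    rw [← pr_marg (p := p) B' W w, Finset.sum_mul]
  simp_rw [h]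
  rw [Finset.sum_neg_distrib]

lemma entropy_pair_expand {D : Type*} [Fintype D] (W : Ω → D) :
    entropy p (fun ω => (B' ω, W ω))
      = - ∑ w, ∑ b, pr p (fun ω => (B' ω, W ω)) (b, w)
          * Real.log (pr p (fun ω => (B' ω, W ω)) (b, w)) := by
  unfold entropy
  rw [Fintype.sum_prod_type, Finset.sum_comm]
  simp_rw [Real.negMulLog, neg_mul, Finset.sum_neg_distrib]

/-- convert sums over `(b,c)` weighted by the `(B,C)` marginal into triple sums. -/
lemma sum_j_marg (F : B → C → ℝ) :
    ∑ c, ∑ b, pr p (fun ω => (B' ω, C' ω)) (b, c) * F b c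
      = ∑ w : A × C, ∑ b, pr p (fun ω => (B' ω, (A' ω, C' ω))) (b, w) * F b w.2 := by
  simp_rw [pr_marg_middle A' B' C', Finset.sum_mul]
  rw [Fintype.sum_prod_type]
  refine Eq.trans (Finset.sum_congr rfl fun c _ => Finset.sum_comm) ?_
  exact Finset.sum_comm

lemma condPr_le_condPr_pair (hp0 : ∀ ω, 0 ≤ p ω) {ω : Ω} (hω : 0 < p ω) (b : B) :
    condPr p B' (fun ω' => (A' ω', C' ω')) b (A' ω, C' ω) > 0 →
    condPr p B' C' b (C' ω) > 0 := by
  intro h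
  unfold condPr at h ⊢
  have hd : 0 < pr p (fun ω' => (A' ω', C' ω')) (A' ω, C' ω) := pr_pos hp0 hω rfl
  have hn : 0 < pr p (fun ω' => (B' ω', (A' ω', C' ω'))) (b, (A' ω, C' ω)) := by
    by_contra hc
    push_neg at hc
    have := le_antisymm hc (pr_nonneg hp0 _ _)
    rw [this] at h
    simp at h
  have hle := pr_comp_ge hp0 (fun ω' => (B' ω', (A' ω', C' ω')))
    (fun x : B × A × C => (x.1, x.2.2)) (b, (A' ω, C' ω))
  exact div_pos (lt_of_lt_of_le hn hle) (pr_pos hp0 hω rfl)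

/-- conditional mutual information as an expected log-likelihood-ratio / KL divergence. -/
lemma cmi_eq_sum (hp0 : ∀ ω, 0 ≤ p ω) :
    condMutualInfo p A' B' C'
      = ∑ ω, p ω * ∑ b,
          condPr p B' (fun ω' => (A' ω', C' ω')) b (A' ω, C' ω) *
            Real.log (condPr p B' (fun ω' => (A' ω', C' ω')) b (A' ω, C' ω)
              / condPr p B' C' b (C' ω)) := by
  refine Eq.trans ?_ (expected_condPr B' hp0 (fun ω' => (A' ω', C' ω'))
    (fun ω b => condPr p B' (fun ω' => (A' ω', C' ω')) b (A' ω, C' ω) *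
            Real.log (condPr p B' (fun ω' => (A' ω', C' ω')) b (A' ω, C' ω)
              / condPr p B' C' b (C' ω)))
    (fun (w : A × C) b => Real.log (condPr p B' (fun ω' => (A' ω', C' ω')) b w
      / condPr p B' C' b w.2)) (fun ω b => rfl)).symm
  -- abbreviate
  set j : B × (A × C) → ℝ := pr p (fun ω => (B' ω, (A' ω, C' ω))) with hj
  set jh : B × C → ℝ := pr p (fun ω => (B' ω, C' ω)) with hjh
  set pW : A × C → ℝ := pr p (fun ω => (A' ω, C' ω)) with hpW
  set pC : C → ℝ := pr p C' with hpC
  unfold condMutualInfo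
  have hABC : entropy p (fun ω => ((A' ω, B' ω), C' ω))
      = entropy p (fun ω => (B' ω, (A' ω, C' ω))) := by
    have hF : Function.Injective (fun x : B × (A × C) => ((x.2.1, x.1), x.2.2)) := by
      intro x y hxy
      simp only [Prod.ext_iff] at hxy
      obtain ⟨⟨h1, h2⟩, h3⟩ := hxy
      exact Prod.ext h2 (Prod.ext h1 h3)
    exact entropy_comp_inj (p := p) (fun ω => (B' ω, (A' ω, C' ω))) hF
  rw [hABC]
  rw [entropy_fst_expand B' (fun ω => (A' ω, C' ω)),
      entropy_pair_expand B' (fun ω => (A' ω, C' ω)),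
      entropy_pair_expand B' C', entropy_fst_expand B' C']
  rw [show (∑ c, ∑ b, pr p (fun ω => (B' ω, C' ω)) (b, c)
        * Real.log (pr p (fun ω => (B' ω, C' ω)) (b, c)))
      = ∑ w : A × C, ∑ b, j (b, w) * Real.log (jh (b, w.2)) from
    sum_j_marg A' B' C' (fun b c => Real.log (jh (b, c)))]
  rw [show (∑ c, ∑ b, pr p (fun ω => (B' ω, C' ω)) (b, c) * Real.log (pr p C' c))
      = ∑ w : A × C, ∑ b, j (b, w) * Real.log (pC w.2) from
    sum_j_marg A' B' C' (fun b c => Real.log (pC c))]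
  have key : ∀ (w : A × C) (b : B),
      j (b, w) * Real.log (condPr p B' (fun ω' => (A' ω', C' ω')) b w / condPr p B' C' b w.2)
        = j (b, w) * Real.log (j (b, w)) - j (b, w) * Real.log (pW w)
          - j (b, w) * Real.log (jh (b, w.2)) + j (b, w) * Real.log (pC w.2) := by
    intro w b
    by_cases hzero : j (b, w) = 0
    · rw [hzero]; ring
    · have hjpos : 0 < j (b, w) := lt_of_le_of_ne (pr_nonneg hp0 _ _) (Ne.symm hzero)
      have hpWpos : 0 < pW w := by
        rcases lt_or_eq_of_le (pr_nonneg hp0 (fun ω => (A' ω, C' ω)) w) with h | h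
        · exact h
        · exact absurd (pr_pair_eq_zero hp0 h.symm b) hzero
      have hjhpos : 0 < jh (b, w.2) := by
        have hle := pr_comp_ge hp0 (fun ω' => (B' ω', (A' ω', C' ω')))
          (fun x : B × A × C => (x.1, x.2.2)) (b, w)
        exact lt_of_lt_of_le hjpos hle
      have hpCpos : 0 < pC w.2 := by
        rcases lt_or_eq_of_le (pr_nonneg hp0 C' w.2) with h | h
        · exact h
        · exact absurd (pr_pair_eq_zero hp0 h.symm b) (ne_of_gt hjhpos)
      have e1 : condPr p B' (fun ω' => (A' ω', C' ω')) b w = j (b, w) / pW w := by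
        unfold condPr; rfl
      have e2 : condPr p B' C' b w.2 = jh (b, w.2) / pC w.2 := by
        unfold condPr; rfl
      rw [e1, e2, Real.log_div (ne_of_gt (div_pos hjpos hpWpos)) (ne_of_gt (div_pos hjhpos hpCpos)),
        Real.log_div (ne_of_gt hjpos) (ne_of_gt hpWpos),
        Real.log_div (ne_of_gt hjhpos) (ne_of_gt hpCpos)]
      ring
  simp_rw [key, Finset.sum_add_distrib, Finset.sum_sub_distrib]
  ring

lemma mixture (hp0 : ∀ ω, 0 ≤ p ω) (g : C → B → ℝ) (f f2 : Ω → B → ℝ)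
    (hf : ∀ ω b, f ω b
      = condPr p B' (fun ω' => (A' ω', C' ω')) b (A' ω, C' ω) * g (C' ω) b)
    (hf2 : ∀ ω b, f2 ω b = condPr p B' C' b (C' ω) * g (C' ω) b) :
    ∑ ω, p ω * ∑ b, f ω b = ∑ ω, p ω * ∑ b, f2 ω b := by
  rw [expected_condPr B' hp0 (fun ω' => (A' ω', C' ω')) f (fun (w : A × C) b => g w.2 b) hf,
      expected_condPr B' hp0 C' f2 (fun c b => g c b) hf2]
  exact (sum_j_marg A' B' C' (fun b c => g c b)).symm

/-- the core per-round identity: algorithm loss = CMI + posterior-predictive loss. -/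
lemma core_identity (hp0 : ∀ ω, 0 ≤ p ω) (Q : C → B → ℝ)
    (hsupp : ∀ ω, 0 < p ω → ∀ b, Q (C' ω) b = 0 → condPr p B' C' b (C' ω) = 0) :
    ∑ ω, p ω * ∑ b, condPr p B' (fun ω' => (A' ω', C' ω')) b (A' ω, C' ω)
        * Real.log (condPr p B' (fun ω' => (A' ω', C' ω')) b (A' ω, C' ω) / Q (C' ω) b)
      = condMutualInfo p A' B' C'
        + ∑ ω, p ω * ∑ b, condPr p B' C' b (C' ω)
            * Real.log (condPr p B' C' b (C' ω) / Q (C' ω) b) := by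
  have hsplit : ∀ ω, p ω * ∑ b, condPr p B' (fun ω' => (A' ω', C' ω')) b (A' ω, C' ω)
        * Real.log (condPr p B' (fun ω' => (A' ω', C' ω')) b (A' ω, C' ω) / Q (C' ω) b)
      = p ω * (∑ b, condPr p B' (fun ω' => (A' ω', C' ω')) b (A' ω, C' ω)
            * Real.log (condPr p B' (fun ω' => (A' ω', C' ω')) b (A' ω, C' ω)
              / condPr p B' C' b (C' ω)))
        + p ω * (∑ b, condPr p B' (fun ω' => (A' ω', C' ω')) b (A' ω, C' ω)
            * Real.log (condPr p B' C' b (C' ω) / Q (C' ω) b)) := by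
    intro ω
    rcases eq_or_lt_of_le (hp0 ω) with h | h
    · rw [← h]; ring
    · rw [← mul_add, ← Finset.sum_add_distrib]
      congr 1
      refine Finset.sum_congr rfl fun b _ => ?_
      by_cases hb : condPr p B' (fun ω' => (A' ω', C' ω')) b (A' ω, C' ω) = 0
      · rw [hb]; ring
      · have hbpos : 0 < condPr p B' (fun ω' => (A' ω', C' ω')) b (A' ω, C' ω) :=
          lt_of_le_of_ne (condPr_nonneg hp0 _ _ _ _) (Ne.symm hb)
        have hhat : 0 < condPr p B' C' b (C' ω) :=
          condPr_le_condPr_pair A' B' C' hp0 h b hbpos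
        have hQ : Q (C' ω) b ≠ 0 := fun hq => absurd (hsupp ω h b hq) (ne_of_gt hhat)
        rw [Real.log_div hb hQ, Real.log_div hb (ne_of_gt hhat),
          Real.log_div (ne_of_gt hhat) hQ]
        ring
  rw [Finset.sum_congr rfl fun ω _ => hsplit ω, Finset.sum_add_distrib,
    ← cmi_eq_sum A' B' C' hp0]
  congr 1
  exact mixture A' B' C' hp0 (fun c b => Real.log (condPr p B' C' b c / Q c b)) _ _
    (fun ω b => rfl) (fun ω b => rfl)

lemma condPr_pair_eq_zero (hp0 : ∀ ω, 0 ≤ p ω) {ω : Ω} (hω : 0 < p ω) {b : B}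
    (h : condPr p B' C' b (C' ω) = 0) :
    condPr p B' (fun ω' => (A' ω', C' ω')) b (A' ω, C' ω) = 0 := by
  by_contra hc
  have hlt := condPr_le_condPr_pair A' B' C' hp0 hω b
    (lt_of_le_of_ne (condPr_nonneg hp0 _ _ _ _) (Ne.symm hc))
  rw [h] at hlt
  exact lt_irrefl 0 hlt

/-- nonnegativity of the CMI. -/
lemma cmi_nonneg (hp0 : ∀ ω, 0 ≤ p ω) : 0 ≤ condMutualInfo p A' B' C' := by
  rw [cmi_eq_sum A' B' C' hp0]
  refine Finset.sum_nonneg fun ω _ => ?_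
  rcases eq_or_lt_of_le (hp0 ω) with h | h
  · rw [← h]; simp
  · refine mul_nonneg (le_of_lt h) (gibbs (fun b => condPr_nonneg hp0 _ _ _ _)
      (fun b => condPr_nonneg hp0 _ _ _ _)
      (condPr_sum_one hp0 _ _ (ne_of_gt (pr_pos hp0 h rfl)))
      (le_of_eq (condPr_sum_one hp0 _ _ (ne_of_gt (pr_pos hp0 h rfl))))
      (fun b hb => condPr_pair_eq_zero A' B' C' hp0 h hb))

end Core

section Chain
variable {Ω Θ 𝒳 𝒴 : Type*} [Fintype Ω] [Fintype Θ] [Fintype 𝒳] [Fintype 𝒴]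
  {p : Ω → ℝ} {T : ℕ} (θ : Ω → Θ) (X : Fin T → Ω → 𝒳) (Y : Fin T → Ω → 𝒴)

def prefRV (k : ℕ) (hk : k ≤ T) (ω : Ω) : (Fin k → 𝒳) × (Fin k → 𝒴) :=
  (fun i => X (Fin.castLE hk i) ω, fun i => Y (Fin.castLE hk i) ω)

def dFun (p : Ω → ℝ) : ℕ → ℝ := fun k =>
  if hk : k ≤ T then
    entropy p (prefRV X Y k hk) - entropy p (fun ω => (θ ω, prefRV X Y k hk ω))
  else 0

lemma snoc_inj {n : ℕ} {α : Type*} {xs xs' : Fin n → α} {x x' : α}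
    (h : (Fin.snoc xs x : Fin (n+1) → α) = Fin.snoc xs' x') : xs = xs' ∧ x = x' := by
  constructor
  · funext i
    have := congrFun h (Fin.castSucc i)
    simpa using this
  · have := congrFun h (Fin.last n)
    simpa using this

lemma snoc_X (t : Fin T) (ω : Ω) :
    (fun i : Fin ((t : ℕ) + 1) => X (Fin.castLE t.isLt i) ω)
      = Fin.snoc (fun i : Fin (t : ℕ) => X (Fin.castLE (le_of_lt t.isLt) i) ω) (X t ω) := by
  funext i
  refine Fin.lastCases ?_ ?_ i
  · have h : Fin.castLE t.isLt (Fin.last (t : ℕ)) = t := Fin.ext (by simp)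
    rw [Fin.snoc_last, h]
  · intro j
    have h : Fin.castLE t.isLt (Fin.castSucc j) = Fin.castLE (le_of_lt t.isLt) j :=
      Fin.ext (by simp)
    rw [Fin.snoc_castSucc, h]

lemma snoc_Y (t : Fin T) (h1 : (t : ℕ) + 1 ≤ T) (ω : Ω) :
    (fun i : Fin ((t : ℕ) + 1) => Y (Fin.castLE h1 i) ω)
      = Fin.snoc (fun i : Fin (t : ℕ) => Y (Fin.castLE (le_of_lt t.isLt) i) ω) (Y t ω) := by
  funext i
  refine Fin.lastCases ?_ ?_ i
  · have h : Fin.castLE t.isLt (Fin.last (t : ℕ)) = t := Fin.ext (by simp)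
    rw [Fin.snoc_last, h]
  · intro j
    have h : Fin.castLE t.isLt (Fin.castSucc j) = Fin.castLE (le_of_lt t.isLt) j :=
      Fin.ext (by simp)
    rw [Fin.snoc_castSucc, h]

lemma chain_step (t : Fin T) :
    condMutualInfo p (X t) θ (pastRV X Y t) + condMutualInfo p θ (Y t) (histRV X Y t)
      = dFun θ X Y p ((t : ℕ) + 1) - dFun θ X Y p (t : ℕ) := by
  have hk1 : (t : ℕ) + 1 ≤ T := t.isLt
  have hkt : (t : ℕ) ≤ T := le_of_lt t.isLt
  rw [dFun, dif_pos hk1]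
  rw [show dFun θ X Y p (t : ℕ) = (if hk : (t:ℕ) ≤ T then
    entropy p (prefRV X Y (t:ℕ) hk) - entropy p (fun ω => (θ ω, prefRV X Y (t:ℕ) hk ω))
      else 0) from rfl, dif_pos hkt]
  unfold condMutualInfo
  have ea : entropy p (fun ω => (X t ω, pastRV X Y t ω)) = entropy p (histRV X Y t) := by
    have hF : Function.Injective
        (fun z : 𝒳 × ((Fin (t:ℕ) → 𝒳) × (Fin (t:ℕ) → 𝒴)) =>
          ((Fin.snoc z.2.1 z.1 : Fin ((t:ℕ)+1) → 𝒳), z.2.2)) := by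
      intro z w h
      simp only [Prod.mk.injEq] at h
      obtain ⟨h1, h2⟩ := h
      obtain ⟨h3, h4⟩ := snoc_inj h1
      exact Prod.ext h4 (Prod.ext h3 h2)
    have hpt : ∀ ω, histRV X Y t ω
        = (fun z : 𝒳 × ((Fin (t:ℕ) → 𝒳) × (Fin (t:ℕ) → 𝒴)) =>
            ((Fin.snoc z.2.1 z.1 : Fin ((t:ℕ)+1) → 𝒳), z.2.2))
          ((fun ω => (X t ω, pastRV X Y t ω)) ω) := by
      intro ω
      exact Prod.ext (snoc_X X t ω) rfl
    exact Eq.trans (entropy_comp_inj (p := p) (fun ω => (X t ω, pastRV X Y t ω)) hF).symm (entropy_congr (fun ω => (hpt ω).symm))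
  have eb : entropy p (fun ω => ((X t ω, θ ω), pastRV X Y t ω))
      = entropy p (fun ω => (θ ω, histRV X Y t ω)) := by
    have hF : Function.Injective
        (fun z : (𝒳 × Θ) × ((Fin (t:ℕ) → 𝒳) × (Fin (t:ℕ) → 𝒴)) =>
          (z.1.2, ((Fin.snoc z.2.1 z.1.1 : Fin ((t:ℕ)+1) → 𝒳), z.2.2))) := by
      intro z w h
      simp only [Prod.mk.injEq] at h
      obtain ⟨h0, h1, h2⟩ := h
      obtain ⟨h3, h4⟩ := snoc_inj h1
      exact Prod.ext (Prod.ext h4 h0) (Prod.ext h3 h2)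
    have hpt : ∀ ω, (θ ω, histRV X Y t ω)
        = (fun z : (𝒳 × Θ) × ((Fin (t:ℕ) → 𝒳) × (Fin (t:ℕ) → 𝒴)) =>
            (z.1.2, ((Fin.snoc z.2.1 z.1.1 : Fin ((t:ℕ)+1) → 𝒳), z.2.2)))
          ((fun ω => ((X t ω, θ ω), pastRV X Y t ω)) ω) := by
      intro ω
      exact Prod.ext rfl (Prod.ext (snoc_X X t ω) rfl)
    exact Eq.trans (entropy_comp_inj (p := p) (fun ω => ((X t ω, θ ω), pastRV X Y t ω)) hF).symm (entropy_congr (fun ω => (hpt ω).symm))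
  have ec : entropy p (fun ω => (Y t ω, histRV X Y t ω))
      = entropy p (prefRV X Y ((t:ℕ)+1) hk1) := by
    have hF : Function.Injective
        (fun z : 𝒴 × ((Fin ((t:ℕ)+1) → 𝒳) × (Fin (t:ℕ) → 𝒴)) =>
          (z.2.1, (Fin.snoc z.2.2 z.1 : Fin ((t:ℕ)+1) → 𝒴))) := by
      intro z w h
      simp only [Prod.mk.injEq] at h
      obtain ⟨h1, h2⟩ := h
      obtain ⟨h3, h4⟩ := snoc_inj h2
      exact Prod.ext h4 (Prod.ext h1 h3)
    have hpt : ∀ ω, prefRV X Y ((t:ℕ)+1) hk1 ω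
        = (fun z : 𝒴 × ((Fin ((t:ℕ)+1) → 𝒳) × (Fin (t:ℕ) → 𝒴)) =>
            (z.2.1, (Fin.snoc z.2.2 z.1 : Fin ((t:ℕ)+1) → 𝒴)))
          ((fun ω => (Y t ω, histRV X Y t ω)) ω) := by
      intro ω
      exact Prod.ext rfl (snoc_Y Y t hk1 ω)
    exact Eq.trans (entropy_comp_inj (p := p) (fun ω => (Y t ω, histRV X Y t ω)) hF).symm (entropy_congr (fun ω => (hpt ω).symm))
  have ed : entropy p (fun ω => ((θ ω, Y t ω), histRV X Y t ω))
      = entropy p (fun ω => (θ ω, prefRV X Y ((t:ℕ)+1) hk1 ω)) := by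
    have hF : Function.Injective
        (fun z : (Θ × 𝒴) × ((Fin ((t:ℕ)+1) → 𝒳) × (Fin (t:ℕ) → 𝒴)) =>
          (z.1.1, (z.2.1, (Fin.snoc z.2.2 z.1.2 : Fin ((t:ℕ)+1) → 𝒴)))) := by
      intro z w h
      simp only [Prod.mk.injEq] at h
      obtain ⟨h0, h1, h2⟩ := h
      obtain ⟨h3, h4⟩ := snoc_inj h2
      exact Prod.ext (Prod.ext h0 h4) (Prod.ext h1 h3)
    have hpt : ∀ ω, (θ ω, prefRV X Y ((t:ℕ)+1) hk1 ω)
        = (fun z : (Θ × 𝒴) × ((Fin ((t:ℕ)+1) → 𝒳) × (Fin (t:ℕ) → 𝒴)) =>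
            (z.1.1, (z.2.1, (Fin.snoc z.2.2 z.1.2 : Fin ((t:ℕ)+1) → 𝒴))))
          ((fun ω => ((θ ω, Y t ω), histRV X Y t ω)) ω) := by
      intro ω
      exact Prod.ext rfl (Prod.ext rfl (snoc_Y Y t hk1 ω))
    exact Eq.trans (entropy_comp_inj (p := p) (fun ω => ((θ ω, Y t ω), histRV X Y t ω)) hF).symm (entropy_congr (fun ω => (hpt ω).symm))
  have ep : entropy p (pastRV X Y t) = entropy p (prefRV X Y (t:ℕ) hkt) :=
    entropy_congr (fun ω => rfl)
  have epθ : entropy p (fun ω => (θ ω, pastRV X Y t ω))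
      = entropy p (fun ω => (θ ω, prefRV X Y (t:ℕ) hkt ω)) :=
    entropy_congr (fun ω => rfl)
  rw [ea, eb, ec, ed, ep, epθ]
  ring

lemma entropy_unique {D : Type*} [Fintype D] [Unique D] (hp1 : ∑ ω, p ω = 1) (Z : Ω → D) :
    entropy p Z = 0 := by
  unfold entropy
  rw [Fintype.sum_unique]
  have h : ∀ ω, Z ω = default := fun ω => Subsingleton.elim _ _
  simp [pr, h, hp1, Real.negMulLog]

lemma chain_rule (hp1 : ∑ ω, p ω = 1)
    (hinput : ∀ t, condMutualInfo p (X t) θ (pastRV X Y t) = 0) :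
    ∑ t : Fin T, condMutualInfo p θ (Y t) (histRV X Y t)
      = mutualInfo p θ (fun ω => ((fun i : Fin T => X i ω), (fun i : Fin T => Y i ω))) := by
  have hsum : ∑ t : Fin T, condMutualInfo p θ (Y t) (histRV X Y t)
      = ∑ t : Fin T, (dFun θ X Y p ((t : ℕ) + 1) - dFun θ X Y p (t : ℕ)) := by
    refine Finset.sum_congr rfl fun t _ => ?_
    rw [← chain_step θ X Y t, hinput t, zero_add]
  rw [hsum,
    Fin.sum_univ_eq_sum_range (fun i => dFun θ X Y p (i + 1) - dFun θ X Y p i) T,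
    Finset.sum_range_sub (fun i => dFun θ X Y p i) T]
  rw [dFun, dif_pos (le_refl T)]
  rw [show dFun θ X Y p 0 = (if hk : 0 ≤ T then
    entropy p (prefRV X Y 0 hk) - entropy p (fun ω => (θ ω, prefRV X Y 0 hk ω))
      else 0) from rfl, dif_pos (Nat.zero_le T)]
  unfold mutualInfo
  haveI : Unique (Fin 0 → 𝒳) := ⟨⟨fun i => i.elim0⟩, fun f => funext fun i => i.elim0⟩
  haveI : Unique (Fin 0 → 𝒴) := ⟨⟨fun i => i.elim0⟩, fun f => funext fun i => i.elim0⟩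
  haveI : Unique ((Fin 0 → 𝒳) × (Fin 0 → 𝒴)) :=
    ⟨⟨(default, default)⟩, fun z => Prod.ext (Subsingleton.elim _ _) (Subsingleton.elim _ _)⟩
  have e0 : entropy p (prefRV X Y 0 (Nat.zero_le T)) = 0 := entropy_unique hp1 _
  have e0θ : entropy p (fun ω => (θ ω, prefRV X Y 0 (Nat.zero_le T) ω)) = entropy p θ := by
    have hF : Function.Injective
        (fun th : Θ => (th, (default : (Fin 0 → 𝒳) × (Fin 0 → 𝒴)))) := by
      intro a b h
      simpa using congrArg Prod.fst h
    have hpt : ∀ ω, (θ ω, prefRV X Y 0 (Nat.zero_le T) ω)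
        = (fun th : Θ => (th, (default : (Fin 0 → 𝒳) × (Fin 0 → 𝒴)))) (θ ω) := by
      intro ω
      exact Prod.ext rfl (Subsingleton.elim _ _)
    rw [entropy_congr hpt]
    exact entropy_comp_inj (p := p) θ hF
  have eT : entropy p (prefRV X Y T (le_refl T))
      = entropy p (fun ω => ((fun i : Fin T => X i ω), (fun i : Fin T => Y i ω))) :=
    entropy_congr (fun ω => rfl)
  have eTθ : entropy p (fun ω => (θ ω, prefRV X Y T (le_refl T) ω))
      = entropy p (fun ω =>
          (θ ω, ((fun i : Fin T => X i ω), (fun i : Fin T => Y i ω)))) := by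
    exact entropy_congr (fun ω => rfl)
  rw [e0, e0θ, eT, eTθ]
  ring

end Chain

section ENN
variable {Ω : Type*} [Fintype Ω] {p : Ω → ℝ}

lemma sum_ofReal_klDivF {B : Type*} [Fintype B] (hp0 : ∀ ω, 0 ≤ p ω)
    (f q : Ω → B → ℝ)
    (hsupp : ∀ ω, 0 < p ω → ∀ b, q ω b = 0 → f ω b = 0)
    (hnn : ∀ ω, 0 < p ω → 0 ≤ ∑ b, f ω b * Real.log (f ω b / q ω b)) :
    ∑ ω, ENNReal.ofReal (p ω) * klDivF (f ω) (q ω)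
      = ENNReal.ofReal (∑ ω, p ω * ∑ b, f ω b * Real.log (f ω b / q ω b)) := by
  rw [ENNReal.ofReal_sum_of_nonneg (fun ω _ => by
    rcases eq_or_lt_of_le (hp0 ω) with h | h
    · rw [← h]; simp
    · exact mul_nonneg (le_of_lt h) (hnn ω h))]
  refine Finset.sum_congr rfl fun ω _ => ?_
  rcases eq_or_lt_of_le (hp0 ω) with h | h
  · rw [← h]; simp
  · rw [klDivF, if_pos (hsupp ω h), ← ENNReal.ofReal_mul (hp0 ω)]

end ENN

/-- loss of an arbitrary algorithm = optimal error + misspecification error. -/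
theorem statement2 {Ω Θ 𝒳 𝒴 : Type*} [Fintype Ω] [Fintype Θ] [Fintype 𝒳] [Fintype 𝒴]
    (p : Ω → ℝ) (hp0 : ∀ ω, 0 ≤ p ω) (hp1 : ∑ ω, p ω = 1)
    (T : ℕ) (hT : 1 ≤ T)
    (θ : Ω → Θ) (X : Fin T → Ω → 𝒳) (Y : Fin T → Ω → 𝒴)
    (hinput : ∀ t : Fin T, condMutualInfo p (X t) θ (pastRV X Y t) = 0)
    (P' : ∀ t : Fin T, ((Fin ((t : ℕ) + 1) → 𝒳) × (Fin (t : ℕ) → 𝒴)) → 𝒴 → ℝ)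
    (hP' : ∀ t h, (∀ y, 0 ≤ P' t h y) ∧ ∑ y, P' t h y = 1) :
    (T : ℝ≥0∞)⁻¹ * ∑ t : Fin T, ∑ ω, ENNReal.ofReal (p ω) *
        klDivF (fun b => condPr p (Y t) (fun ω' => (θ ω', histRV X Y t ω')) b
                  (θ ω, histRV X Y t ω))
          (P' t (histRV X Y t ω))
      = ENNReal.ofReal (mutualInfo p θ
            (fun ω => ((fun i : Fin T => X i ω), (fun i : Fin T => Y i ω)))) / (T : ℝ≥0∞)
        + (T : ℝ≥0∞)⁻¹ * ∑ t : Fin T, ∑ ω, ENNReal.ofReal (p ω) *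
            klDivF (fun b => condPr p (Y t) (histRV X Y t) b (histRV X Y t ω))
              (P' t (histRV X Y t ω)) := by
  have main : (∑ t : Fin T, ∑ ω, ENNReal.ofReal (p ω) *
        klDivF (fun b => condPr p (Y t) (fun ω' => (θ ω', histRV X Y t ω')) b
                  (θ ω, histRV X Y t ω))
          (P' t (histRV X Y t ω)))
      = ENNReal.ofReal (mutualInfo p θ
            (fun ω => ((fun i : Fin T => X i ω), (fun i : Fin T => Y i ω))))
        + ∑ t : Fin T, ∑ ω, ENNReal.ofReal (p ω) *
            klDivF (fun b => condPr p (Y t) (histRV X Y t) b (histRV X Y t ω))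
              (P' t (histRV X Y t ω)) := by
    by_cases hbad : ∃ t : Fin T, ∃ ω, 0 < p ω ∧ ∃ b, P' t (histRV X Y t ω) b = 0
        ∧ 0 < condPr p (Y t) (histRV X Y t) b (histRV X Y t ω)
    · obtain ⟨t, ω, hω, b, hQ, hhat⟩ := hbad
      have hR : (∑ t : Fin T, ∑ ω, ENNReal.ofReal (p ω) *
          klDivF (fun b => condPr p (Y t) (histRV X Y t) b (histRV X Y t ω))
            (P' t (histRV X Y t ω))) = ⊤ := by
        rw [ENNReal.sum_eq_top]
        refine ⟨t, Finset.mem_univ t, ?_⟩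
        rw [ENNReal.sum_eq_top]
        refine ⟨ω, Finset.mem_univ ω, ?_⟩
        rw [klDivF, if_neg (by push_neg; exact ⟨b, hQ, ne_of_gt hhat⟩)]
        exact ENNReal.mul_top (ne_of_gt (ENNReal.ofReal_pos.mpr hω))
      have hL : (∑ t : Fin T, ∑ ω, ENNReal.ofReal (p ω) *
          klDivF (fun b => condPr p (Y t) (fun ω' => (θ ω', histRV X Y t ω')) b
            (θ ω, histRV X Y t ω)) (P' t (histRV X Y t ω))) = ⊤ := by
        have hnum : 0 < pr p (fun ω'' => (Y t ω'', histRV X Y t ω'')) (b, histRV X Y t ω) := by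
          by_contra hc
          push_neg at hc
          have h0 := le_antisymm hc (pr_nonneg hp0 _ _)
          unfold condPr at hhat
          rw [h0] at hhat
          simp at hhat
        obtain ⟨ω', hω', hZ⟩ := pr_pos_elim hp0 hnum
        have hY' : Y t ω' = b := congrArg Prod.fst hZ
        have hH' : histRV X Y t ω' = histRV X Y t ω := congrArg Prod.snd hZ
        rw [ENNReal.sum_eq_top]
        refine ⟨t, Finset.mem_univ t, ?_⟩
        rw [ENNReal.sum_eq_top]
        refine ⟨ω', Finset.mem_univ ω', ?_⟩
        have hstar : 0 < condPr p (Y t) (fun ω'' => (θ ω'', histRV X Y t ω'')) b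
            (θ ω', histRV X Y t ω') := by
          rw [← hY']
          exact condPr_pos hp0 hω'
        rw [klDivF, if_neg (by
          push_neg
          exact ⟨b, by rw [hH']; exact hQ, ne_of_gt hstar⟩)]
        exact ENNReal.mul_top (ne_of_gt (ENNReal.ofReal_pos.mpr hω'))
      rw [hL, hR, add_top]
    · push_neg at hbad
      have hgood : ∀ (t : Fin T) ω, 0 < p ω → ∀ b, P' t (histRV X Y t ω) b = 0 →
          condPr p (Y t) (histRV X Y t) b (histRV X Y t ω) = 0 := by
        intro t ω hω b hq
        exact le_antisymm (hbad t ω hω b hq) (condPr_nonneg hp0 _ _ _ _)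
      have key : ∀ t : Fin T,
          (∑ ω, ENNReal.ofReal (p ω) *
            klDivF (fun b => condPr p (Y t) (fun ω' => (θ ω', histRV X Y t ω')) b
              (θ ω, histRV X Y t ω)) (P' t (histRV X Y t ω)))
          = ENNReal.ofReal (condMutualInfo p θ (Y t) (histRV X Y t))
            + ∑ ω, ENNReal.ofReal (p ω) *
                klDivF (fun b => condPr p (Y t) (histRV X Y t) b (histRV X Y t ω))
                  (P' t (histRV X Y t ω)) := by
        intro t
        have hsupp_star : ∀ ω, 0 < p ω → ∀ b, P' t (histRV X Y t ω) b = 0 →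
            condPr p (Y t) (fun ω' => (θ ω', histRV X Y t ω')) b (θ ω, histRV X Y t ω) = 0 :=
          fun ω hω b hq =>
            condPr_pair_eq_zero θ (Y t) (histRV X Y t) hp0 hω (hgood t ω hω b hq)
        have hstar_nn : ∀ ω, 0 < p ω → 0 ≤ ∑ b,
            condPr p (Y t) (fun ω' => (θ ω', histRV X Y t ω')) b (θ ω, histRV X Y t ω) *
              Real.log (condPr p (Y t) (fun ω' => (θ ω', histRV X Y t ω')) b
                (θ ω, histRV X Y t ω) / P' t (histRV X Y t ω) b) := by
          intro ω hω
          exact gibbs (fun b => condPr_nonneg hp0 _ _ _ _) (fun b => (hP' t _).1 b)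
            (condPr_sum_one hp0 _ _ (ne_of_gt (pr_pos hp0 hω rfl)))
            (le_of_eq (hP' t _).2) (hsupp_star ω hω)
        have hhat_nn : ∀ ω, 0 < p ω → 0 ≤ ∑ b,
            condPr p (Y t) (histRV X Y t) b (histRV X Y t ω) *
              Real.log (condPr p (Y t) (histRV X Y t) b (histRV X Y t ω)
                / P' t (histRV X Y t ω) b) := by
          intro ω hω
          exact gibbs (fun b => condPr_nonneg hp0 _ _ _ _) (fun b => (hP' t _).1 b)
            (condPr_sum_one hp0 _ _ (ne_of_gt (pr_pos hp0 hω rfl)))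
            (le_of_eq (hP' t _).2) (fun b hb => hgood t ω hω b hb)
        rw [sum_ofReal_klDivF hp0
            (fun ω b => condPr p (Y t) (fun ω' => (θ ω', histRV X Y t ω')) b
              (θ ω, histRV X Y t ω))
            (fun ω b => P' t (histRV X Y t ω) b) hsupp_star hstar_nn,
          sum_ofReal_klDivF hp0
            (fun ω b => condPr p (Y t) (histRV X Y t) b (histRV X Y t ω))
            (fun ω b => P' t (histRV X Y t ω) b) (fun ω hω => hgood t ω hω) hhat_nn]
        rw [core_identity θ (Y t) (histRV X Y t) hp0 (P' t) (fun ω hω => hgood t ω hω)]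
        rw [ENNReal.ofReal_add (cmi_nonneg θ (Y t) (histRV X Y t) hp0)
          (Finset.sum_nonneg fun ω _ => by
            rcases eq_or_lt_of_le (hp0 ω) with h | h
            · rw [← h]; simp
            · exact mul_nonneg (le_of_lt h) (hhat_nn ω h))]
      rw [Finset.sum_congr rfl (fun t _ => key t), Finset.sum_add_distrib]
      congr 1
      rw [← ENNReal.ofReal_sum_of_nonneg
        (fun t _ => cmi_nonneg θ (Y t) (histRV X Y t) hp0)]
      rw [chain_rule θ X Y hp1 hinput]
  rw [main, mul_add, ENNReal.div_eq_inv_mul]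

end
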